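/- Let τ_1 < τ_2 < τ_3 be any three distinct quantile levels in (0.5,1) (more generally K ≥ 3 distinct levels in (0.5,1); the same holds for levels in (0,0.5)). If two Tukey lambda parameter vectors θ = (θ_1,θ_2,θ_3) and θ̃ = (θ̃_1,θ̃_2,θ̃_3), with θ_1,θ̃_1 ∈ ℝ, θ_2,θ̃_2 > 0, θ_3,θ̃_3 < 1 and θ_3,θ̃_3 ≠ 0, satisfy Q(τ_k,θ) = Q(τ_k,θ̃) for all k, then θ = θ̃. -/

import Mathlib

open Real

/-- The Tukey lambda quantile function
`Q(τ,θ) = θ₁ + θ₂ · (τ^θ₃ − (1−τ)^θ₃)/θ₃` for a parameter vector `θ = (θ₁, θ₂, θ₃)`. -/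
noncomputable def tukeyQ (θ : ℝ × ℝ × ℝ) (τ : ℝ) : ℝ :=
  θ.1 + θ.2.1 * ((τ ^ θ.2.2 - (1 - τ) ^ θ.2.2) / θ.2.2)

section TukeyAux
open Set


noncomputable def tchi (t a : ℝ) : ℝ := a * (1 - t ^ (a - 1)) / (1 + t ^ a)

lemma tchi_hasDeriv {t : ℝ} (ht : 0 < t) (ht1 : t < 1) (a : ℝ) :
    HasDerivAt (tchi t)
      (((1 - t ^ (a-1)) * (1 + t ^ a) - a * log t * (t ^ (a-1) + t ^ a)) / (1 + t ^ a) ^ 2) a := by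
  have hpos : (0:ℝ) < 1 + t ^ a := by positivity
  have h1 : HasDerivAt (fun a : ℝ => t ^ (a - 1)) (t ^ (a-1) * log t) a := by
    have := ((hasStrictDerivAt_const_rpow ht (a-1)).hasDerivAt).comp a
      ((hasDerivAt_id a).sub_const 1)
    exact this.congr_deriv (by ring)
  have h0 : HasDerivAt (fun a : ℝ => t ^ a) (t ^ a * log t) a :=
    (hasStrictDerivAt_const_rpow ht a).hasDerivAt
  have hnum : HasDerivAt (fun a : ℝ => a * (1 - t ^ (a-1)))
      (1 * (1 - t ^ (a-1)) + a * -(t ^ (a-1) * log t)) a :=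
    by exact ((hasDerivAt_id' a).mul (h1.const_sub 1)).congr_deriv (by ring)
  have hden : HasDerivAt (fun a : ℝ => 1 + t ^ a) (t ^ a * log t) a :=
    by exact ((hasDerivAt_const a 1).add h0).congr_deriv (by ring)
  have := hnum.div hden hpos.ne'
  refine this.congr_deriv ?_
  ring

lemma tchi_strictAntiOn {t : ℝ} (ht : 0 < t) (ht1 : t < 1) :
    StrictAntiOn (tchi t) (Iio (0:ℝ)) := by
  apply strictAntiOn_of_deriv_neg (convex_Iio 0)
  · exact fun a _ => ((tchi_hasDeriv ht ht1 a).continuousAt).continuousWithinAt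
  · intro a ha
    rw [interior_Iio] at ha
    rw [(tchi_hasDeriv ht ht1 a).deriv]
    have hT1 : 1 < t ^ (a - 1) := by
      rw [one_lt_rpow_iff_of_pos ht]
      exact Or.inr ⟨ht1, by linarith [ha.out]⟩
    have hT0 : (0:ℝ) < t ^ a := rpow_pos_of_pos ht a
    have hL : log t < 0 := log_neg ht ht1
    have haL : 0 < a * log t := mul_pos_of_neg_of_neg ha.out hL
    have hnum : (1 - t ^ (a-1)) * (1 + t ^ a) - a * log t * (t ^ (a-1) + t ^ a) < 0 := by
      nlinarith
    exact div_neg_of_neg_of_pos hnum (by positivity)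


noncomputable def pfun (a x : ℝ) : ℝ := x ^ a + (1 - x) ^ a

lemma pfun_pos {a x : ℝ} (hx : 0 < x) (hx1 : x < 1) : 0 < pfun a x := by
  have h1 : (0:ℝ) < 1 - x := by linarith
  unfold pfun; positivity

lemma pfun_hasDeriv {x : ℝ} (hx : 0 < x) (hx1 : x < 1) (a : ℝ) :
    HasDerivAt (pfun a) (a * x ^ (a-1) - a * (1-x) ^ (a-1)) x := by
  have h1 : HasDerivAt (fun x : ℝ => x ^ a) (a * x ^ (a-1)) x :=
    hasDerivAt_rpow_const (Or.inl hx.ne')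
  have h2 : HasDerivAt (fun x : ℝ => (1 - x) ^ a) (a * (1-x) ^ (a-1) * (-1)) x := by
    have hne : (1:ℝ) - x ≠ 0 := by linarith
    have := (hasDerivAt_rpow_const (p := a) (Or.inl hne)).comp x
      (((hasDerivAt_id x).const_sub 1))
    exact this.congr_deriv (by ring)
  have := h1.add h2
  refine this.congr_deriv ?_
  ring

-- key identity: p'(x) = (tchi ((1-x)/x) a / x) * p(x)
lemma pfun_deriv_eq {a x : ℝ} (hx : (1:ℝ)/2 < x) (hx1 : x < 1) :
    a * x ^ (a-1) - a * (1-x) ^ (a-1) = tchi ((1-x)/x) a / x * pfun a x := by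
  have hx0 : 0 < x := by linarith
  have hy0 : 0 < 1 - x := by linarith
  have hta : ((1-x)/x) ^ a = (1-x) ^ a / x ^ a := div_rpow hy0.le hx0.le _
  have hta1 : ((1-x)/x) ^ (a-1) = (1-x) ^ (a-1) / x ^ (a-1) := div_rpow hy0.le hx0.le _
  have hxa : x ^ a = x ^ (a-1) * x := by
    rw [← rpow_add_one hx0.ne']; ring_nf
  have hya : (1-x) ^ a = (1-x) ^ (a-1) * (1-x) := by
    rw [← rpow_add_one hy0.ne']; ring_nf
  have hXa : (0:ℝ) < x ^ (a-1) := rpow_pos_of_pos hx0 _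
  have hYa : (0:ℝ) < (1-x) ^ (a-1) := rpow_pos_of_pos hy0 _
  unfold tchi pfun
  rw [hta, hta1, hxa, hya]
  have hden : 1 + (1-x) ^ (a-1) * (1-x) / (x ^ (a-1) * x) > 0 := by positivity
  field_simp


lemma ratio_strictMono {a c : ℝ} (ha : a < 0) (hc : c < 0) (hac : a < c) :
    StrictMonoOn (fun x => pfun a x / pfun c x) (Ioo (1/2 : ℝ) 1) := by
  have hderiv : ∀ x ∈ Ioo (1/2 : ℝ) 1, HasDerivAt (fun x => pfun a x / pfun c x)
      (((a * x ^ (a-1) - a * (1-x) ^ (a-1)) * pfun c x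
        - pfun a x * (c * x ^ (c-1) - c * (1-x) ^ (c-1))) / (pfun c x) ^ 2) x := by
    intro x hx
    have hx0 : (0:ℝ) < x := lt_trans (by norm_num) hx.1
    exact (pfun_hasDeriv hx0 hx.2 a).div (pfun_hasDeriv hx0 hx.2 c)
      (pfun_pos hx0 hx.2).ne'
  apply strictMonoOn_of_deriv_pos (convex_Ioo _ _)
  · exact fun x hx => ((hderiv x hx).continuousAt).continuousWithinAt
  · intro x hx
    rw [interior_Ioo] at hx
    rw [(hderiv x hx).deriv]
    have hx0 : (0:ℝ) < x := lt_trans (by norm_num) hx.1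
    have hx1 : x < 1 := hx.2
    have ht0 : 0 < (1-x)/x := by
      have : (0:ℝ) < 1 - x := by linarith
      positivity
    have ht1 : (1-x)/x < 1 := by
      rw [div_lt_one hx0]; linarith [hx.1]
    have hchi : tchi ((1-x)/x) c < tchi ((1-x)/x) a :=
      tchi_strictAntiOn ht0 ht1 (mem_Iio.2 ha) (mem_Iio.2 hc) hac
    have hpa := pfun_pos (a := a) hx0 hx1
    have hpc := pfun_pos (a := c) hx0 hx1
    rw [pfun_deriv_eq hx.1 hx1, pfun_deriv_eq hx.1 hx1]
    have hnum : tchi ((1-x)/x) a / x * pfun a x * pfun c x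
        - pfun a x * (tchi ((1-x)/x) c / x * pfun c x)
        = (tchi ((1-x)/x) a - tchi ((1-x)/x) c) / x * (pfun a x * pfun c x) := by
      ring
    rw [hnum]
    have : 0 < (tchi ((1-x)/x) a - tchi ((1-x)/x) c) / x := by
      apply div_pos (by linarith) hx0
    positivity

lemma no_double_crossing {a c α β x₁ x₂ : ℝ} (ha : a < 0) (hc : c < 0) (hac : a < c)
    (hα : 0 < α) (hβ : 0 < β)
    (hx₁ : x₁ ∈ Ioo (1/2 : ℝ) 1) (hx₂ : x₂ ∈ Ioo (1/2 : ℝ) 1) (hlt : x₁ < x₂)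
    (h1 : α * pfun a x₁ = β * pfun c x₁) (h2 : α * pfun a x₂ = β * pfun c x₂) : False := by
  have hmono := ratio_strictMono ha hc hac hx₁ hx₂ hlt
  have e1 : pfun a x₁ / pfun c x₁ = β / α := by
    have hpc := pfun_pos (a := c) (lt_trans (by norm_num) hx₁.1) hx₁.2
    field_simp
    linarith [h1]
  have e2 : pfun a x₂ / pfun c x₂ = β / α := by
    have hpc := pfun_pos (a := c) (lt_trans (by norm_num) hx₂.1) hx₂.2
    field_simp
    linarith [h2]
  simp only [e1, e2] at hmono
  exact lt_irrefl _ hmono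


lemma tukeyQ_hasDeriv (θ : ℝ × ℝ × ℝ) (hne : θ.2.2 ≠ 0) {x : ℝ} (hx : 0 < x) (hx1 : x < 1) :
    HasDerivAt (tukeyQ θ) (θ.2.1 * pfun (θ.2.2 - 1) x) x := by
  have h1 : HasDerivAt (fun x : ℝ => x ^ θ.2.2) (θ.2.2 * x ^ (θ.2.2 - 1)) x :=
    hasDerivAt_rpow_const (Or.inl hx.ne')
  have h2 : HasDerivAt (fun x : ℝ => (1 - x) ^ θ.2.2)
      (θ.2.2 * (1-x) ^ (θ.2.2 - 1) * (-1)) x := by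
    have hne' : (1:ℝ) - x ≠ 0 := by linarith
    have := (hasDerivAt_rpow_const (p := θ.2.2) (Or.inl hne')).comp x
      ((hasDerivAt_id x).const_sub 1)
    exact this.congr_deriv (by ring)
  have : HasDerivAt (tukeyQ θ)
      (0 + θ.2.1 * ((θ.2.2 * x ^ (θ.2.2 - 1) - θ.2.2 * (1-x) ^ (θ.2.2 - 1) * (-1)) / θ.2.2)) x :=
    (hasDerivAt_const x θ.1).add (((h1.sub h2).div_const θ.2.2).const_mul θ.2.1)
  convert this using 1
  unfold pfun
  field_simp
  ring

/-- `K ≥ 3` distinct quantile levels in `(0.5, 1)` identify the Tukey lambda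
parameters: if two admissible parameter vectors give the same quantiles at all `K` levels,
they are equal. -/
theorem tukey_identification_three_levels_upper_tail
    (K : ℕ) (hK : 3 ≤ K) (τ : Fin K → ℝ) (hτmono : StrictMono τ)
    (hτ : ∀ k, τ k ∈ Set.Ioo (1 / 2 : ℝ) 1)
    (θ θt : ℝ × ℝ × ℝ)
    (hθ2 : 0 < θ.2.1) (hθt2 : 0 < θt.2.1)
    (hθ3lt : θ.2.2 < 1) (hθt3lt : θt.2.2 < 1)
    (hθ3ne : θ.2.2 ≠ 0) (hθt3ne : θt.2.2 ≠ 0)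
    (heq : ∀ k, tukeyQ θ (τ k) = tukeyQ θt (τ k)) :
    θ = θt := by
  set F : ℝ → ℝ := fun x => tukeyQ θ x - tukeyQ θt x with hF
  have hFderiv : ∀ x ∈ Ioo (1/2 : ℝ) 1,
      HasDerivAt F (θ.2.1 * pfun (θ.2.2 - 1) x - θt.2.1 * pfun (θt.2.2 - 1) x) x := by
    intro x hx
    have hx0 : (0:ℝ) < x := lt_trans (by norm_num) hx.1
    exact (tukeyQ_hasDeriv θ hθ3ne hx0 hx.2).sub (tukeyQ_hasDeriv θt hθt3ne hx0 hx.2)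
  -- the three levels
  let k0 : Fin K := ⟨0, by omega⟩
  let k1 : Fin K := ⟨1, by omega⟩
  let k2 : Fin K := ⟨2, by omega⟩
  have h01 : τ k0 < τ k1 := hτmono (by simp [k0, k1, Fin.lt_def])
  have h12 : τ k1 < τ k2 := hτmono (by simp [k1, k2, Fin.lt_def])
  -- Rolle on [τ k0, τ k1] and [τ k1, τ k2]
  have rolle : ∀ i j : Fin K, τ i < τ j →
      ∃ x ∈ Ioo (τ i) (τ j),
        θ.2.1 * pfun (θ.2.2 - 1) x = θt.2.1 * pfun (θt.2.2 - 1) x := by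
    intro i j hij
    have hsub : Icc (τ i) (τ j) ⊆ Ioo (1/2 : ℝ) 1 := fun y hy =>
      ⟨lt_of_lt_of_le (hτ i).1 hy.1, lt_of_le_of_lt hy.2 (hτ j).2⟩
    obtain ⟨x, hx, hx0⟩ := exists_hasDerivAt_eq_zero hij
      (fun y hy => ((hFderiv y (hsub hy)).continuousAt).continuousWithinAt)
      (by simp only [hF]; rw [heq i, heq j]; ring)
      (fun y hy => hFderiv y (hsub (Ioo_subset_Icc_self hy)))
    exact ⟨x, hx, by linarith [hx0]⟩
  obtain ⟨x₁, hx₁, e₁⟩ := rolle k0 k1 h01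
  obtain ⟨x₂, hx₂, e₂⟩ := rolle k1 k2 h12
  have hx₁' : x₁ ∈ Ioo (1/2 : ℝ) 1 :=
    ⟨lt_trans (hτ k0).1 hx₁.1, lt_trans hx₁.2 (hτ k1).2⟩
  have hx₂' : x₂ ∈ Ioo (1/2 : ℝ) 1 :=
    ⟨lt_trans (hτ k1).1 hx₂.1, lt_trans hx₂.2 (hτ k2).2⟩
  have hlt : x₁ < x₂ := lt_trans hx₁.2 hx₂.1
  have ha : θ.2.2 - 1 < 0 := by linarith
  have hc : θt.2.2 - 1 < 0 := by linarith
  rcases lt_trichotomy θ.2.2 θt.2.2 with h | h | h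
  · exact absurd (no_double_crossing ha hc (by linarith) hθ2 hθt2 hx₁' hx₂' hlt e₁ e₂) id
  · -- equal exponents
    have hθ3 : θ.2.2 = θt.2.2 := h
    have hpp : 0 < pfun (θ.2.2 - 1) x₁ :=
      pfun_pos (lt_trans (by norm_num) hx₁'.1) hx₁'.2
    have h2eq : θ.2.1 = θt.2.1 := by
      rw [← hθ3] at e₁
      have := mul_right_cancel₀ hpp.ne' e₁
      exact this
    have h1eq : θ.1 = θt.1 := by
      have := heq k0
      unfold tukeyQ at this
      rw [← hθ3, ← h2eq] at this
      linarith
    obtain ⟨a1, a2, a3⟩ := θ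
    obtain ⟨b1, b2, b3⟩ := θt
    simp_all
  · exact absurd (no_double_crossing hc ha (by linarith) hθt2 hθ2 hx₁' hx₂' hlt
      e₁.symm e₂.symm) id

end TukeyAux
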